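/- arXiv:1510.06094 — 2 statements merged into one kernel-verified Lean document; each statement's English description precedes it below -/
import Mathlib

section
/- Let k = 2K+1 ≥ 5 be an odd integer and let i be an arbitrary integer (possibly negative). Then F_k^{(i)} = G_k^{(i)} as polynomials, i.e. for every s with 1 ≤ s ≤ K-1, (-1) · ∑_{n=0}^{k-2s} Ch(i, k-2s-n) · C(n+2s-2, n) · B_n = ∑_{n=0}^{k-2s} Ch(k-2-i, k-2s-n) · C(n+2s-2, n) · B_n, where for an integer a and a natural number b, Ch(a, b) := a(a-1)⋯(a-b+1)/b! is the generalized binomial coefficient (Mathlib's `Ring.choose` over ℚ). -/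
open Finset

private lemma choose_neg_q (y : ℚ) (l : ℕ) :
    Ring.choose (-y) l = (-1) ^ l * Ring.choose (y + l - 1) l := by
  have key : (descPochhammer ℤ l).smeval (-y)
      = (-1) ^ l * (descPochhammer ℤ l).smeval (y + l - 1) := by
    rw [Polynomial.descPochhammer_smeval_eq_ascPochhammer]
    have h : -y - l + 1 = -(y + l - 1) := by ring
    rw [h, Polynomial.ascPochhammer_smeval_neg_eq_descPochhammer]
    rw [Int.negOnePow_def, Units.smul_def, zpow_natCast]; simp
  rw [Ring.descPochhammer_eq_factorial_smul_choose, Ring.descPochhammer_eq_factorial_smul_choose,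
    nsmul_eq_mul, nsmul_eq_mul] at key
  have hf : (l.factorial : ℚ) ≠ 0 := by exact_mod_cast l.factorial_ne_zero
  apply mul_left_cancel₀ hf
  rw [key]; ring

private lemma choose_sub_expand (c b : ℕ) (hbc : b ≤ c) (x : ℚ) :
    Ring.choose ((c : ℚ) - x) b
      = ∑ j ∈ range (b + 1),
          (-1) ^ j * Ring.choose x j * (Nat.choose (c - j) (b - j) : ℚ) := by
  have h0 : (c : ℚ) - x = -(x - c) := by ring
  rw [h0, choose_neg_q]
  have h1 : x - (c : ℚ) + b - 1 = x + (-((c + 1 - b : ℕ) : ℚ)) := by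
    have : ((c + 1 - b : ℕ) : ℚ) = (c : ℚ) + 1 - b := by
      push_cast [Nat.cast_sub (by omega : b ≤ c + 1)]; ring
    rw [this]; ring
  rw [h1, Ring.add_choose_eq b (Commute.all _ _),
    Finset.Nat.sum_antidiagonal_eq_sum_range_succ_mk, Finset.mul_sum]
  refine Finset.sum_congr rfl fun j hj => ?_
  have hjb : j ≤ b := by simpa [Nat.lt_succ_iff] using hj
  rw [choose_neg_q]
  have h2 : ((c + 1 - b : ℕ) : ℚ) + (b - j : ℕ) - 1 = ((c - j : ℕ) : ℚ) := by
    push_cast [Nat.cast_sub (by omega : b ≤ c + 1), Nat.cast_sub hjb,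
      Nat.cast_sub (by omega : j ≤ c)]
    ring
  rw [h2, Ring.choose_natCast]
  have h3 : (-1 : ℚ) ^ (b - j) * (-1) ^ j = (-1) ^ b := by
    rw [← pow_add]; congr 1; omega
  have h4 : (-1 : ℚ) ^ b * (-1) ^ (b - j) = (-1) ^ j := by
    have h5 : ((-1 : ℚ) ^ j) ^ 2 = 1 := by
      rw [← pow_mul, pow_mul']; norm_num
    calc (-1 : ℚ) ^ b * (-1) ^ (b - j) = ((-1) ^ (b - j) * (-1) ^ j) * (-1) ^ (b - j) := by
            rw [h3]
      _ = ((-1 : ℚ) ^ (b - j)) ^ 2 * (-1) ^ j := by ring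
      _ = (-1) ^ j := by rw [← pow_mul, pow_mul']; norm_num
  calc (-1 : ℚ) ^ b * (Ring.choose x j * ((-1) ^ (b - j) * ((c - j).choose (b - j) : ℚ)))
      = ((-1 : ℚ) ^ b * (-1) ^ (b - j)) * Ring.choose x j * ((c - j).choose (b - j) : ℚ) := by
        ring
    _ = (-1) ^ j * Ring.choose x j * ((c - j).choose (b - j) : ℚ) := by rw [h4]

private lemma nat_key (q r n : ℕ) (hn : n ≤ q) :
    Nat.choose (n + r) n * Nat.choose (q + r) (q - n)
      = Nat.choose (q + r) r * Nat.choose q n := by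
  have h1 : (q + r).choose (n + r) * (n + r).choose r
      = (q + r).choose r * (q + r - r).choose (n + r - r) :=
    Nat.choose_mul (by omega)
  have h2 : (q + r).choose (q - n) = (q + r).choose (n + r) :=
    Nat.choose_symm_of_eq_add (by omega)
  have h3 : (n + r).choose n = (n + r).choose r := Nat.choose_symm_add
  have h4 : q + r - r = q := by omega
  have h5 : n + r - r = n := by omega
  rw [h2, h3, mul_comm, h1, h4, h5]

private lemma bkey (q : ℕ) :
    ((-1 : ℚ)) ^ q * bernoulli q = bernoulli q + (if q = 1 then 1 else 0) := by
  by_cases h1 : q = 1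
  · subst h1; norm_num [bernoulli_one]
  · rcases Nat.even_or_odd q with h | h
    · rw [Even.neg_one_pow h]; simp [h1]
    · have hq : 1 < q := by
        rcases Nat.lt_or_ge q 2 with h2 | h2
        · interval_cases q
          · exact absurd h (by simp)
          · exact absurd rfl h1
        · exact h2
      have : bernoulli q = 0 := by
        rw [bernoulli_eq_bernoulli'_of_ne_one h1, bernoulli'_eq_zero_of_odd h hq]
      simp [this, h1]

private lemma key_main (m r : ℕ) (hm : Odd m) (x : ℚ) :
    (-1 : ℚ) * ∑ n ∈ range (m + 1),
        Ring.choose x (m - n) * (Nat.choose (n + r) n : ℚ) * bernoulli n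
      = ∑ n ∈ range (m + 1),
          Ring.choose (((m + r : ℕ) : ℚ) - x) (m - n)
            * (Nat.choose (n + r) n : ℚ) * bernoulli n := by
  -- Expand the RHS
  have hrhs : ∑ n ∈ range (m + 1),
        Ring.choose (((m + r : ℕ) : ℚ) - x) (m - n)
          * (Nat.choose (n + r) n : ℚ) * bernoulli n
      = ∑ j ∈ range (m + 1), ∑ n ∈ range (m - j + 1),
          (-1) ^ j * Ring.choose x j * (Nat.choose (m + r - j) (m - j - n) : ℚ)
            * (Nat.choose (n + r) n : ℚ) * bernoulli n := by
    rw [← Finset.sum_comm' (s := range (m + 1)) (t := fun n => range (m - n + 1))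
      (s' := fun j => range (m - j + 1))
      (f := fun n j => (-1) ^ j * Ring.choose x j * (Nat.choose (m + r - j) (m - j - n) : ℚ)
            * (Nat.choose (n + r) n : ℚ) * bernoulli n)
      (fun a b => by simp only [mem_range]; omega)]
    refine Finset.sum_congr rfl fun n hn => ?_
    have hnm : n ≤ m := by simpa [Nat.lt_succ_iff] using hn
    rw [choose_sub_expand (m + r) (m - n) (by omega), Finset.sum_mul, Finset.sum_mul]
    refine Finset.sum_congr rfl fun j hj => ?_
    have h6 : (m + r - j).choose (m - n - j) = (m + r - j).choose (m - j - n) := by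
      rw [show m - n - j = m - j - n from by omega]
    rw [h6]
  rw [hrhs]
  -- Reindex the LHS
  have hlhs : ∑ n ∈ range (m + 1),
        Ring.choose x (m - n) * (Nat.choose (n + r) n : ℚ) * bernoulli n
      = ∑ j ∈ range (m + 1),
          Ring.choose x (m - (m - j)) * (Nat.choose ((m - j) + r) (m - j) : ℚ)
            * bernoulli (m - j) := by
    have hreflect := (Finset.sum_range_reflect
      (fun n => Ring.choose x (m - n) * (Nat.choose (n + r) n : ℚ) * bernoulli n) (m + 1)).symm
    simp only [Nat.add_sub_cancel] at hreflect
    exact hreflect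
  rw [hlhs, Finset.mul_sum]
  refine Finset.sum_congr rfl fun j hj => ?_
  have hjm : j ≤ m := by simpa [Nat.lt_succ_iff] using hj
  set q := m - j with hq
  -- inner sum evaluation
  have hinner : ∑ n ∈ range (q + 1),
        (-1 : ℚ) ^ j * Ring.choose x j * (Nat.choose (m + r - j) (q - n) : ℚ)
          * (Nat.choose (n + r) n : ℚ) * bernoulli n
      = (-1 : ℚ) ^ j * Ring.choose x j * (Nat.choose (q + r) r : ℚ)
          * ((if q = 1 then 1 else 0) + bernoulli q) := by
    have hstep : ∑ n ∈ range (q + 1),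
        (-1 : ℚ) ^ j * Ring.choose x j * (Nat.choose (m + r - j) (q - n) : ℚ)
          * (Nat.choose (n + r) n : ℚ) * bernoulli n
        = ∑ n ∈ range (q + 1),
        (-1 : ℚ) ^ j * Ring.choose x j * (Nat.choose (q + r) r : ℚ)
          * ((Nat.choose q n : ℚ) * bernoulli n) := by
      refine Finset.sum_congr rfl fun n hn => ?_
      have hnq : n ≤ q := by simpa [Nat.lt_succ_iff] using hn
      have hmr : m + r - j = q + r := by omega
      rw [hmr]
      have := nat_key q r n hnq
      have hcast : (Nat.choose (q + r) (q - n) : ℚ) * (Nat.choose (n + r) n : ℚ)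
          = (Nat.choose (q + r) r : ℚ) * (Nat.choose q n : ℚ) := by
        rw [← Nat.cast_mul, ← Nat.cast_mul, mul_comm (Nat.choose (q + r) (q - n)), this]
      calc (-1 : ℚ) ^ j * Ring.choose x j * (Nat.choose (q + r) (q - n) : ℚ)
            * (Nat.choose (n + r) n : ℚ) * bernoulli n
          = (-1 : ℚ) ^ j * Ring.choose x j
            * ((Nat.choose (q + r) (q - n) : ℚ) * (Nat.choose (n + r) n : ℚ)) * bernoulli n := by
            ring
        _ = (-1 : ℚ) ^ j * Ring.choose x j
            * ((Nat.choose (q + r) r : ℚ) * (Nat.choose q n : ℚ)) * bernoulli n := by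
            rw [hcast]
        _ = (-1 : ℚ) ^ j * Ring.choose x j * (Nat.choose (q + r) r : ℚ)
            * ((Nat.choose q n : ℚ) * bernoulli n) := by ring
    rw [hstep, ← Finset.mul_sum]
    congr 1
    rw [Finset.sum_range_succ, sum_bernoulli, Nat.choose_self]
    push_cast; ring
  rw [hinner]
  -- final scalar identity
  have hCs : Nat.choose (q + r) q = Nat.choose (q + r) r := Nat.choose_symm_add
  have hjq : (-1 : ℚ) ^ j * (-1) ^ q = -1 := by
    rw [← pow_add]
    obtain ⟨t, ht⟩ := hm
    exact Odd.neg_one_pow ⟨t, by omega⟩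
  have hb := bkey q
  have hfin : (-1 : ℚ) ^ j * ((if q = 1 then 1 else 0) + bernoulli q) = -bernoulli q := by
    rw [add_comm, ← hb, ← mul_assoc, hjq]; ring
  calc (-1 : ℚ) * (Ring.choose x (m - q) * (Nat.choose (q + r) q : ℚ) * bernoulli q)
      = (Ring.choose x (m - q) * (Nat.choose (q + r) r : ℚ)) * (-bernoulli q) := by
        rw [hCs]; ring
    _ = (Ring.choose x (m - q) * (Nat.choose (q + r) r : ℚ))
          * ((-1 : ℚ) ^ j * ((if q = 1 then 1 else 0) + bernoulli q)) := by rw [hfin]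
    _ = (-1 : ℚ) ^ j * Ring.choose x (m - q) * (Nat.choose (q + r) r : ℚ)
          * ((if q = 1 then 1 else 0) + bernoulli q) := by ring
    _ = (-1 : ℚ) ^ j * Ring.choose x j * (Nat.choose (q + r) r : ℚ)
          * ((if q = 1 then 1 else 0) + bernoulli q) := by
        rw [show m - q = j from by omega]

/-- **`F_k^{(i)} = G_k^{(i)}` for arbitrary integer `i` (coefficient form).**
For odd `k = 2K+1 ≥ 5` and any integer `i` (possibly negative), for every `1 ≤ s ≤ K-1`,
`(-1) · ∑_{n=0}^{k-2s} Ch(i, k-2s-n)·C(n+2s-2, n)·B_n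
  = ∑_{n=0}^{k-2s} Ch(k-2-i, k-2s-n)·C(n+2s-2, n)·B_n`,
where `Ch(a,b) = a(a-1)⋯(a-b+1)/b!` is the generalized binomial coefficient
(`Ring.choose` over `ℚ`). -/
theorem Fpoly_eq_Gpoly_int (K : ℕ) (hK : 2 ≤ K) (i : ℤ) :
    ∀ s : ℕ, 1 ≤ s → s ≤ K - 1 →
      (-1 : ℚ) * ∑ n ∈ Finset.range (2 * K + 1 - 2 * s + 1),
          Ring.choose (i : ℚ) (2 * K + 1 - 2 * s - n)
            * (Nat.choose (n + 2 * s - 2) n : ℚ) * bernoulli n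
      = ∑ n ∈ Finset.range (2 * K + 1 - 2 * s + 1),
          Ring.choose (((2 * K - 1 - i : ℤ) : ℚ)) (2 * K + 1 - 2 * s - n)
            * (Nat.choose (n + 2 * s - 2) n : ℚ) * bernoulli n := by
  intro s hs1 hsK
  have hs2 : 2 * s + 2 ≤ 2 * K := by omega
  set m := 2 * K + 1 - 2 * s with hm
  set r := 2 * s - 2 with hr
  have hmr : m + r = 2 * K - 1 := by omega
  have hodd : Odd m := ⟨K - s, by omega⟩
  have hcast : ((2 * K - 1 - i : ℤ) : ℚ) = ((m + r : ℕ) : ℚ) - (i : ℚ) := by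
    rw [hmr]; push_cast [Nat.cast_sub (by omega : 1 ≤ 2 * K)]; ring
  have key := key_main m r hodd (i : ℚ)
  have hn2 : ∀ n : ℕ, n + 2 * s - 2 = n + r := fun n => by omega
  rw [hcast]
  calc (-1 : ℚ) * ∑ n ∈ Finset.range (2 * K + 1 - 2 * s + 1),
          Ring.choose (i : ℚ) (2 * K + 1 - 2 * s - n)
            * (Nat.choose (n + 2 * s - 2) n : ℚ) * bernoulli n
      = (-1 : ℚ) * ∑ n ∈ Finset.range (m + 1),
          Ring.choose (i : ℚ) (m - n) * (Nat.choose (n + r) n : ℚ) * bernoulli n := by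
        congr 1
        exact Finset.sum_congr rfl fun n _ => by rw [hn2 n]
    _ = ∑ n ∈ Finset.range (m + 1),
          Ring.choose (((m + r : ℕ) : ℚ) - (i : ℚ)) (m - n)
            * (Nat.choose (n + r) n : ℚ) * bernoulli n := key
    _ = ∑ n ∈ Finset.range (2 * K + 1 - 2 * s + 1),
          Ring.choose (((m + r : ℕ) : ℚ) - (i : ℚ)) (2 * K + 1 - 2 * s - n)
            * (Nat.choose (n + 2 * s - 2) n : ℚ) * bernoulli n := by
        exact Finset.sum_congr rfl fun n _ => by rw [hn2 n]
end

section
/- Let k = 2K+1 ≥ 5 be an odd integer. Then for every integer s with 1 ≤ s ≤ K and every integer i (possibly negative), one has the Bernoulli number identity (-1) · ∑_{n=0}^{k-2s} Ch(i, k-2s-n) · C(n+2s-2, n) · B_n = ∑_{n=0}^{k-2s} Ch(k-2-i, k-2s-n) · C(n+2s-2, n) · B_n, where for an integer a and a natural number b, Ch(a, b) := a(a-1)⋯(a-b+1)/b! is the generalized binomial coefficient (Mathlib's `Ring.choose` over ℚ). -/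
open Finset

/-- The auxiliary polynomial-in-`x` sum. -/
private noncomputable def bifPP (r m : ℕ) (x : ℚ) : ℚ :=
  ∑ n ∈ Finset.range (m + 1),
    Ring.choose x (m - n) * (Nat.choose (n + r) n : ℚ) * bernoulli n

private lemma bifPP_step (r m : ℕ) (x : ℚ) :
    bifPP r (m + 1) (x + 1) - bifPP r (m + 1) x = bifPP r m x := by
  unfold bifPP
  rw [← Finset.sum_sub_distrib, Finset.sum_range_succ]
  have hl : m + 1 - (m + 1) = 0 := by omega
  rw [hl, Ring.choose_zero_right, Ring.choose_zero_right, sub_self, add_zero]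
  refine Finset.sum_congr rfl fun n hn => ?_
  have hn' : n ≤ m := by simpa [Nat.lt_succ_iff] using hn
  have h1 : m + 1 - n = (m - n) + 1 := by omega
  rw [h1, Ring.choose_succ_succ]
  ring

private lemma bif_nat_id (r m n : ℕ) (h : n ≤ m) :
    (m + r).choose (m - n) * (n + r).choose n = (m + r).choose m * m.choose n := by
  have h1 := Nat.choose_mul (n := m + r) h
  have h2 := Nat.choose_mul (n := m + r) (show n ≤ n + r by omega)
  have e2 : n + r - n = r := by omega
  rw [e2] at h2
  have h3 : (m + r).choose (m - n) = (m + r).choose (n + r) := by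
    have := Nat.choose_symm (show n + r ≤ m + r by omega)
    rw [show (m + r) - (n + r) = m - n by omega] at this
    exact this
  have h4 : (m + r - n).choose (m - n) = (m + r - n).choose r := by
    have := Nat.choose_symm (show m - n ≤ m + r - n by omega)
    rw [show (m + r - n) - (m - n) = r by omega] at this
    exact this.symm
  rw [h3, h2, ← h4, ← h1]

private lemma bifPP_zero (r m : ℕ) :
    bifPP r m 0 = (Nat.choose (m + r) m : ℚ) * bernoulli m := by
  unfold bifPP
  rw [Finset.sum_eq_single m]
  · rw [Nat.sub_self, Ring.choose_zero_right, one_mul]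
  · intro n hn hne
    obtain ⟨k, hk⟩ : ∃ k, m - n = k + 1 := by
      have h : n ≤ m := by simpa [Nat.lt_succ_iff] using hn
      exact ⟨m - n - 1, by omega⟩
    rw [hk, Ring.choose_zero_succ]
    ring
  · intro h
    exact absurd (Finset.self_mem_range_succ m) h

private lemma bifPP_top (r m : ℕ) :
    bifPP r m ((m : ℚ) + r) =
      (Nat.choose (m + r) m : ℚ) *
        ∑ n ∈ Finset.range (m + 1), (Nat.choose m n : ℚ) * bernoulli n := by
  unfold bifPP
  rw [Finset.mul_sum]
  refine Finset.sum_congr rfl fun n hn => ?_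
  have h : n ≤ m := by simpa [Nat.lt_succ_iff] using hn
  have hcast : (m : ℚ) + r = ((m + r : ℕ) : ℚ) := by push_cast; ring
  rw [hcast, Ring.choose_natCast]
  have hid : ((m + r).choose (m - n) : ℚ) * ((n + r).choose n : ℚ)
      = ((m + r).choose m : ℚ) * (m.choose n : ℚ) := by
    exact_mod_cast congrArg (Nat.cast : ℕ → ℚ) (bif_nat_id r m n h)
  rw [hid, mul_assoc]

private lemma bifPP_key (r m : ℕ) : ∀ i : ℤ,
    bifPP r m (i : ℚ) + (-1 : ℚ) ^ (m + 1) * bifPP r m ((m : ℚ) + r - i) = 0 := by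
  induction m with
  | zero =>
    intro i
    have h0 : ∀ x : ℚ, bifPP r 0 x = 1 := by
      intro x
      unfold bifPP
      simp [Ring.choose_zero_right]
    rw [h0, h0]
    norm_num
  | succ m ih =>
    have hstep : ∀ j : ℤ, bifPP r (m + 1) ((j : ℚ) + 1)
        + (-1 : ℚ) ^ (m + 2) * bifPP r (m + 1) (((m : ℚ) + 1) + r - ((j : ℚ) + 1))
        = bifPP r (m + 1) (j : ℚ)
        + (-1 : ℚ) ^ (m + 2) * bifPP r (m + 1) (((m : ℚ) + 1) + r - j) := by
      intro j
      have h1 := bifPP_step r m (j : ℚ)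
      have h2 := bifPP_step r m ((m : ℚ) + r - j)
      have hy1 : ((m : ℚ) + 1) + r - ((j : ℚ) + 1) = (m : ℚ) + r - j := by ring
      have hy2 : ((m : ℚ) + 1) + r - j = ((m : ℚ) + r - j) + 1 := by ring
      have h3 := ih j
      rw [hy1, hy2]
      have hsgn : (-1 : ℚ) ^ (m + 2) = -(-1 : ℚ) ^ (m + 1) := by
        rw [pow_succ]; ring
      rw [hsgn]
      linear_combination h1 + (-1 : ℚ) ^ (m + 1) * h2 + h3
    have hconst : ∀ j : ℤ, bifPP r (m + 1) (j : ℚ)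
        + (-1 : ℚ) ^ (m + 2) * bifPP r (m + 1) (((m : ℚ) + 1) + r - j)
        = bifPP r (m + 1) (0 : ℚ)
        + (-1 : ℚ) ^ (m + 2) * bifPP r (m + 1) (((m : ℚ) + 1) + r - 0) := by
      intro j
      induction j using Int.induction_on with
      | zero => norm_num
      | succ k hk =>
        have hs := hstep k
        push_cast at hs hk ⊢
        ring_nf at hs hk ⊢
        linarith [hs, hk]
      | pred k hk =>
        have hs := hstep (-(k + 1))
        push_cast at hs hk ⊢
        ring_nf at hs hk ⊢
        linarith [hs, hk]
    intro i
    have hi := hconst i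
    have harg : ((m : ℚ) + 1) + r - 0 = (m : ℚ) + 1 + r := by ring
    have hzero : bifPP r (m + 1) (0 : ℚ)
        + (-1 : ℚ) ^ (m + 2) * bifPP r (m + 1) ((m : ℚ) + 1 + r) = 0 := by
      have htop := bifPP_top r (m + 1)
      have hztop : ((m + 1 : ℕ) : ℚ) + r = (m : ℚ) + 1 + r := by push_cast; ring
      rw [hztop] at htop
      have hz := bifPP_zero r (m + 1)
      have hsum : ∑ n ∈ Finset.range (m + 1 + 1), ((m + 1).choose n : ℚ) * bernoulli n
          = (if m + 1 = 1 then (1 : ℚ) else 0) + bernoulli (m + 1) := by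
        rw [Finset.sum_range_succ, sum_bernoulli]
        simp
      rw [hz, htop, hsum]
      rcases Nat.even_or_odd m with he | ho
      · have hsgn : (-1 : ℚ) ^ (m + 2) = 1 := Even.neg_one_pow (by
          obtain ⟨t, ht⟩ := he; exact ⟨t + 1, by omega⟩)
        rw [hsgn]
        rcases Nat.eq_zero_or_pos m with h0 | hpos
        · subst h0
          norm_num [bernoulli_one]
        · have hm2 : 2 ≤ m := by
            obtain ⟨t, ht⟩ := he; omega
          have hodd : bernoulli (m + 1) = 0 := by
            rw [bernoulli_eq_bernoulli'_of_ne_one (by omega)]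
            exact bernoulli'_eq_zero_of_odd (by obtain ⟨t, ht⟩ := he; exact ⟨t, by omega⟩) (by omega)
          rw [hodd, if_neg (by omega)]
          ring
      · obtain ⟨t, ht⟩ := ho
        have hodd2 : Odd (m + 2) := ⟨t + 1, by omega⟩
        have hsgn : (-1 : ℚ) ^ (m + 2) = -1 := Odd.neg_one_pow hodd2
        rw [hsgn, if_neg (by omega)]
        ring
    rw [harg, hzero] at hi
    convert hi using 4 <;> push_cast <;> ring

/-- **A family of Bernoulli number identities.**
For odd `k = 2K+1 ≥ 5`, every integer `s` with `1 ≤ s ≤ K`, and every integer `i`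
(possibly negative),
`(-1) · ∑_{n=0}^{k-2s} Ch(i, k-2s-n)·C(n+2s-2, n)·B_n
  = ∑_{n=0}^{k-2s} Ch(k-2-i, k-2s-n)·C(n+2s-2, n)·B_n`,
where `Ch(a,b) = a(a-1)⋯(a-b+1)/b!` is the generalized binomial coefficient
(`Ring.choose` over `ℚ`). -/
theorem bernoulli_identity_family (K : ℕ) (hK : 2 ≤ K) (s : ℕ) (hs1 : 1 ≤ s) (hs2 : s ≤ K)
    (i : ℤ) :
    (-1 : ℚ) * ∑ n ∈ Finset.range (2 * K + 1 - 2 * s + 1),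
        Ring.choose (i : ℚ) (2 * K + 1 - 2 * s - n)
          * (Nat.choose (n + 2 * s - 2) n : ℚ) * bernoulli n
    = ∑ n ∈ Finset.range (2 * K + 1 - 2 * s + 1),
        Ring.choose (((2 * K - 1 - i : ℤ) : ℚ)) (2 * K + 1 - 2 * s - n)
          * (Nat.choose (n + 2 * s - 2) n : ℚ) * bernoulli n := by
  set m := 2 * K + 1 - 2 * s with hm
  set r := 2 * s - 2 with hr
  have hsum : ∀ x : ℚ, (∑ n ∈ Finset.range (m + 1),
      Ring.choose x (m - n) * (Nat.choose (n + 2 * s - 2) n : ℚ) * bernoulli n)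
      = bifPP r m x := by
    intro x
    unfold bifPP
    refine Finset.sum_congr rfl fun n _ => ?_
    have hnr : n + 2 * s - 2 = n + r := by omega
    rw [hnr]
  have hkey := bifPP_key r m i
  have heven : Even (m + 1) := by
    refine ⟨K + 1 - s, ?_⟩
    omega
  rw [Even.neg_one_pow heven, one_mul] at hkey
  have harg : (m : ℚ) + r - i = ((2 * K - 1 - i : ℤ) : ℚ) := by
    have h1 : (m : ℚ) = 2 * K + 1 - 2 * s := by
      rw [hm]; push_cast [Nat.cast_sub (show 2 * s ≤ 2 * K + 1 by omega)]; ring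
    have h2 : (r : ℚ) = 2 * s - 2 := by
      rw [hr]; push_cast [Nat.cast_sub (show 2 ≤ 2 * s by omega)]; ring
    rw [h1, h2]; push_cast; ring
  rw [hsum, hsum, ← harg]
  linarith [hkey]
end
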